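/- arXiv:1601.07259 — 3 statements merged into one kernel-verified Lean document; each statement's English description precedes it below -/
import Mathlib

section
/- The subshift X of the Construction is minimal: for every x ∈ X the orbit {σ^k x : k ∈ ℤ} is dense in X. -/
open Filter MeasureTheory Topology

namespace EntDim

/-- The left shift `σ` on `A^ℤ`: `(shift x) i = x (i + 1)`. -/
def shift {A : Type*} (x : ℤ → A) : ℤ → A := fun i => x (i + 1)

/-- The shift by an integer `k`: `(shiftZ k x) i = x (i + k)`, i.e. `σ^k`. -/
def shiftZ {A : Type*} (k : ℤ) (x : ℤ → A) : ℤ → A := fun i => x (i + k)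

/-- A subshift: a nonempty closed shift-invariant subset of `A^ℤ`. -/
def IsSubshift {A : Type*} [TopologicalSpace A] (X : Set (ℤ → A)) : Prop :=
  X.Nonempty ∧ IsClosed X ∧ shift '' X = X

/-- `B_n(X)`: the set of words of length `n` occurring in `X`. -/
def wordsOf {A : Type*} (X : Set (ℤ → A)) (n : ℕ) : Set (Fin n → A) :=
  { w | ∃ x ∈ X, ∀ i : Fin n, w i = x ((i : ℕ) : ℤ) }

/-- `X` is minimal: every orbit is dense in `X`. -/
def IsMinimal {A : Type*} [TopologicalSpace A] (X : Set (ℤ → A)) : Prop :=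
  ∀ x ∈ X, X ⊆ closure { z | ∃ k : ℤ, z = shiftZ k x }

/-- `μ` is a shift-invariant Borel probability measure carried by `X`. -/
def IsInvProbOn {A : Type*} [MeasurableSpace A] (μ : Measure (ℤ → A))
    (X : Set (ℤ → A)) : Prop :=
  IsProbabilityMeasure μ ∧ MeasurePreserving shift μ μ ∧ μ X = 1

/-- The cylinder `[u] = {x ∈ X : x_i = u_i for 0 ≤ i < |u|}` of a finite word `u`. -/
def cylW {A : Type*} (X : Set (ℤ → A)) (u : List A) : Set (ℤ → A) :=
  { x | x ∈ X ∧ ∀ i : Fin u.length, x ((i : ℕ) : ℤ) = u.get i }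

/-- The `n`-cylinder `P_n(x) = {y ∈ X : y_i = x_i for 0 ≤ i < n}` of a point `x`. -/
def cylPt {A : Type*} (X : Set (ℤ → A)) (x : ℤ → A) (n : ℕ) : Set (ℤ → A) :=
  { y | y ∈ X ∧ ∀ i : ℕ, i < n → y (i : ℤ) = x (i : ℤ) }

/-- The first return time `R_n(x) = inf {k ≥ 1 : x_{k+i} = x_i for 0 ≤ i < n}`
(with the junk value `0` if no such `k` exists). -/
noncomputable def retTime {A : Type*} (x : ℤ → A) (n : ℕ) : ℕ :=
  sInf { k : ℕ | 1 ≤ k ∧ ∀ i : ℕ, i < n → x ((k : ℤ) + (i : ℕ)) = x ((i : ℕ) : ℤ) }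

/-- The sequence of pairs `(l_j, N_j)`, `j ≥ 1`, with `l_1 = l1`, `N_1 = 2^⌊√l1⌋`,
`l_{j+1} = l_j · N_j` and `N_{j+1} = (⌊√N_j⌋)!`.  (The value at `j = 0` is junk.) -/
def lN (l1 : ℕ) : ℕ → ℕ × ℕ
  | 0 => (0, 0)
  | 1 => (l1, 2 ^ Nat.sqrt l1)
  | j + 2 => ((lN l1 (j + 1)).1 * (lN l1 (j + 1)).2, Nat.factorial (Nat.sqrt (lN l1 (j + 1)).2))

/-- The length `l_j` of the words of `C_j`. -/
def lseq (l1 j : ℕ) : ℕ := (lN l1 j).1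

/-- The cardinality `N_j` of `C_j`. -/
def Nseq (l1 j : ℕ) : ℕ := (lN l1 j).2

/-- `i ∈ P_j = {2} ∪ {m² : 2 ≤ m ≤ ⌊√N⌋}` (1-based position `i`, where `N = N_j`):
the permuted (unstable) positions. -/
def PermutedIdx (N i : ℕ) : Prop :=
  i = 2 ∨ ∃ m : ℕ, 2 ≤ m ∧ m ≤ Nat.sqrt N ∧ i = m ^ 2

/-- The data of the Construction: a positive integer `l1` and ordered lists
`C j` (`j ≥ 1`) of distinct binary words (`C 0` is irrelevant), where `C 1` consists of
`N_1 = 2^⌊√l1⌋` words of length `l1`, `C j` consists of `N_j` words of length `l_j`, and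
`C (j+1)` is the set of all concatenations of the words of `C j` reordered by a
permutation preserving `P_j` and fixing every position outside `P_j`. -/
structure Construction where
  l1 : ℕ
  hl1 : 0 < l1
  C : ℕ → List (List Bool)
  nodup : ∀ j, 1 ≤ j → (C j).Nodup
  length_eq : ∀ j, 1 ≤ j → (C j).length = Nseq l1 j
  wordLength : ∀ j, 1 ≤ j → ∀ w ∈ C j, w.length = lseq l1 j
  mem_succ : ∀ j, 1 ≤ j → ∀ w : List Bool,
    w ∈ C (j + 1) ↔
      ∃ τ : Equiv.Perm (Fin (C j).length),
        (∀ i : Fin (C j).length, ¬ PermutedIdx (Nseq l1 j) ((i : ℕ) + 1) → τ i = i) ∧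
        (∀ i : Fin (C j).length, PermutedIdx (Nseq l1 j) ((i : ℕ) + 1) →
            PermutedIdx (Nseq l1 j) ((τ i : ℕ) + 1)) ∧
        w = (List.ofFn fun i : Fin (C j).length => (C j).get (τ i)).flatten

/-- The subshift `X` of the Construction: all `x ∈ {0,1}^ℤ` each of whose finite
subwords occurs as a subword of some word in some `C j`. -/
def Construction.space (c : Construction) : Set (ℤ → Bool) :=
  { x | ∀ (a : ℤ) (n : ℕ), ∃ j, 1 ≤ j ∧ ∃ w ∈ c.C j,
      (List.ofFn fun i : Fin n => x (a + (i : ℕ))) <:+: w }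

/-- The offset `t_j(x) ∈ {0, …, l_j − 1}` of the decomposition of `x` into `C j`-words
(defined as an infimum; it is unique in the Marker variant). -/
noncomputable def Construction.tOffset (c : Construction) (j : ℕ) (x : ℤ → Bool) : ℕ :=
  sInf { t : ℕ | t < lseq c.l1 j ∧ ∀ m : ℤ,
    (List.ofFn fun i : Fin (lseq c.l1 j) =>
      x (m * (lseq c.l1 j : ℤ) - (t : ℤ) + (i : ℕ))) ∈ c.C j }

/-- The Marker variant: every word of `C 1` begins with `001`, and `00` occurs in each
word of `C 1` only as its prefix. -/
structure MarkerConstruction extends Construction where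
  marker_prefix : ∀ w ∈ C 1, [false, false, true] <+: w
  marker_unique : ∀ w ∈ C 1, ∀ n : ℕ, [false, false] <+: w.drop n → n = 0


/-! ### Auxiliary lemmas for Statement 2 -/

lemma Nseq_pos (l1 : ℕ) : ∀ j, 1 ≤ j → 0 < Nseq l1 j
  | 1, _ => by simp [Nseq, lN]
  | (m + 2), _ => by simp [Nseq, lN]; exact Nat.factorial_pos _

lemma lseq_succ_eq (l1 : ℕ) (j : ℕ) (hj : 1 ≤ j) :
    lseq l1 (j + 1) = lseq l1 j * Nseq l1 j := by
  obtain ⟨m, rfl⟩ := Nat.exists_eq_add_of_le hj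
  simp [lseq, Nseq, lN, Nat.add_comm 1 m]

lemma lseq_pos (c : Construction) : ∀ j, 1 ≤ j → 0 < lseq c.l1 j
  | 1, _ => by simpa [lseq, lN] using c.hl1
  | (m + 2), _ => by
    rw [show m + 2 = (m + 1) + 1 by rfl, lseq_succ_eq c.l1 (m + 1) (by omega)]
    exact Nat.mul_pos (lseq_pos c (m + 1) (by omega)) (Nseq_pos c.l1 (m + 1) (by omega))

lemma lseq_mono (c : Construction) (j j' : ℕ) (hj : 1 ≤ j) (hjj' : j ≤ j') :
    lseq c.l1 j ≤ lseq c.l1 j' := by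
  obtain ⟨k, rfl⟩ := Nat.exists_eq_add_of_le hjj'
  clear hjj'
  induction k with
  | zero => simp
  | succ k ih =>
    calc lseq c.l1 j ≤ lseq c.l1 (j + k) := ih
      _ ≤ lseq c.l1 (j + k) * Nseq c.l1 (j + k) :=
          Nat.le_mul_of_pos_right _ (Nseq_pos c.l1 (j + k) (by omega))
      _ = lseq c.l1 (j + (k + 1)) := (lseq_succ_eq c.l1 (j + k) (by omega)).symm

/-- If a word `u` of length `≥ 2l` is an infix of a concatenation of blocks of
length `l > 0`, then `u` contains one of the blocks as an infix. -/
lemma block_of_infix {l : ℕ} (hl : 0 < l) :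
    ∀ (L : List (List Bool)) (s u t : List Bool),
      (∀ v ∈ L, v.length = l) → s ++ u ++ t = L.flatten → 2 * l ≤ u.length →
      ∃ v ∈ L, v <:+: u := by
  intro L
  induction L with
  | nil =>
    intro s u t _ h hu
    simp only [List.flatten_nil, List.append_eq_nil_iff] at h
    rw [h.1.2] at hu; simp at hu; omega
  | cons v L ih =>
    intro s u t hlen h hu
    have hv : v.length = l := hlen v (by simp)
    rw [List.append_assoc, List.flatten_cons] at h
    rcases List.append_eq_append_iff.mp h with ⟨a, ha, hb⟩ | ⟨a, ha, hb⟩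
    · -- v = s ++ a, u ++ t = a ++ L.flatten
      rcases List.append_eq_append_iff.mp hb with ⟨e, he, _⟩ | ⟨e, he, hf⟩
      · -- a = u ++ e : then |v| ≥ |u| ≥ 2l > l, contradiction
        exfalso
        have : v.length = s.length + (u.length + e.length) := by
          rw [ha, he]; simp
        omega
      · -- u = a ++ e, L.flatten = e ++ t
        have hal : a.length ≤ l := by
          have : v.length = s.length + a.length := by rw [ha]; simp
          omega
        have hel : l ≤ e.length := by
          have : u.length = a.length + e.length := by rw [he]; simp
          omega
        cases L with
        | nil =>
          exfalso
          simp only [List.flatten_nil] at hf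
          have := congrArg List.length hf
          simp at this
          omega
        | cons v' L2 =>
          have hv' : v'.length = l := hlen v' (by simp)
          rw [List.flatten_cons] at hf
          rcases List.append_eq_append_iff.mp hf.symm with ⟨f, hf1, _⟩ | ⟨f, hf1, _⟩
          · -- v' = e ++ f : since |e| ≥ l = |v'|, f = [] and v' = e
            have hfl : f.length = 0 := by
              have : v'.length = e.length + f.length := by rw [hf1]; simp
              omega
            have hfe : f = [] := List.length_eq_zero_iff.mp hfl
            refine ⟨v', by simp, a, [], ?_⟩
            rw [he, hf1, hfe]; simp
          · -- e = v' ++ f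
            exact ⟨v', by simp, a, f, by rw [he, hf1]; simp⟩
    · -- s = v ++ a, L.flatten = a ++ (u ++ t)
      obtain ⟨v0, hv0, hinf⟩ :=
        ih a u t (fun w hw => hlen w (by simp [hw])) (by rw [List.append_assoc]; exact hb.symm) hu
      exact ⟨v0, by simp [hv0], hinf⟩

lemma flatten_decomp (c : Construction) (j0 : ℕ) :
    ∀ W : List (List Bool),
      (∀ v ∈ W, ∃ L : List (List Bool), (∀ u ∈ L, u ∈ c.C j0) ∧ v = L.flatten) →
      ∃ L : List (List Bool), (∀ u ∈ L, u ∈ c.C j0) ∧ W.flatten = L.flatten := by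
  intro W
  induction W with
  | nil => exact fun _ => ⟨[], by simp, rfl⟩
  | cons v W ih =>
    intro h
    obtain ⟨L1, hL1, hv⟩ := h v (by simp)
    obtain ⟨L2, hL2, hW⟩ := ih (fun w hw => h w (by simp [hw]))
    refine ⟨L1 ++ L2, ?_, ?_⟩
    · intro u hu; rcases List.mem_append.mp hu with h' | h'
      exacts [hL1 u h', hL2 u h']
    · rw [List.flatten_cons, hv, hW, List.flatten_append]

/-- Every word of `C j1` (`j1 ≥ j0 ≥ 1`) is a concatenation of words of `C j0`. -/
lemma mem_decomp (c : Construction) (j0 : ℕ) (hj0 : 1 ≤ j0) :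
    ∀ j1, j0 ≤ j1 → ∀ w ∈ c.C j1,
      ∃ L : List (List Bool), (∀ u ∈ L, u ∈ c.C j0) ∧ w = L.flatten := by
  intro j1 hj1
  induction j1, hj1 using Nat.le_induction with
  | base => exact fun w hw => ⟨[w], by simpa using hw, by simp⟩
  | succ j1 hj1' ih =>
    intro w hw
    obtain ⟨τ, -, -, hwe⟩ := (c.mem_succ j1 (le_trans hj0 hj1') w).mp hw
    obtain ⟨L, hL, hfl⟩ := flatten_decomp c j0
      (List.ofFn fun i : Fin (c.C j1).length => (c.C j1).get (τ i))
      (by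
        intro v hv
        rw [List.mem_ofFn] at hv
        obtain ⟨i, rfl⟩ := hv
        exact ih _ (List.get_mem _ _))
    exact ⟨L, hL, by rw [hwe, hfl]⟩

/-- Every word of `C j` is an infix of every word of `C (j+1)`. -/
lemma infix_succ (c : Construction) (j : ℕ) (hj : 1 ≤ j)
    (v : List Bool) (hv : v ∈ c.C j) (w : List Bool) (hw : w ∈ c.C (j + 1)) :
    v <:+: w := by
  obtain ⟨τ, -, -, hwe⟩ := (c.mem_succ j hj w).mp hw
  obtain ⟨i0, hi0⟩ := List.mem_iff_get.mp hv
  have hmem : v ∈ List.ofFn fun i : Fin (c.C j).length => (c.C j).get (τ i) := by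
    rw [List.mem_ofFn]
    refine ⟨τ.symm i0, ?_⟩
    show (c.C j).get (τ (τ.symm i0)) = v
    rw [Equiv.apply_symm_apply]
    exact hi0
  rw [hwe]
  exact List.infix_of_mem_flatten hmem

/-- Key lemma: any central word of `y` occurs in some shift of `x`. -/
lemma key_lemma (c : Construction) {x y : ℤ → Bool}
    (hx : x ∈ c.space) (hy : y ∈ c.space) (n : ℕ) :
    ∃ k : ℤ, ∀ i : ℤ, -(n : ℤ) ≤ i → i ≤ n → shiftZ k x i = y i := by
  obtain ⟨j0, hj0, wy, hwy, hyinf⟩ := hy (-(n : ℤ)) (2 * n + 1)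
  set l : ℕ := lseq c.l1 (j0 + 1) with hldef
  have hlpos : 0 < l := lseq_pos c (j0 + 1) (by omega)
  obtain ⟨j1, hj1, w, hw, hxinf⟩ := hx 0 (2 * l)
  set u : List Bool := List.ofFn fun i : Fin (2 * l) => x (0 + (i : ℕ)) with hudef
  have hulen : u.length = 2 * l := by simp [hudef]
  have hwlen : w.length = lseq c.l1 j1 := c.wordLength j1 hj1 w hw
  have hle : u.length ≤ w.length := hxinf.length_le
  have hj01 : j0 + 1 ≤ j1 := by
    by_contra hcon
    have := lseq_mono c j1 (j0 + 1) hj1 (by omega)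
    omega
  obtain ⟨L, hL, hwL⟩ := mem_decomp c (j0 + 1) (by omega) j1 hj01 w hw
  obtain ⟨s, t, hst⟩ := hxinf
  rw [hwL] at hst
  obtain ⟨v, hvL, hvu⟩ := block_of_infix hlpos L s u t
    (fun v hv => c.wordLength (j0 + 1) (by omega) v (hL v hv)) hst (by omega)
  have hwyv : wy <:+: v := infix_succ c j0 hj0 wy hwy v (hL v hvL)
  have hfin : (List.ofFn fun i : Fin (2 * n + 1) => y (-(n : ℤ) + (i : ℕ))) <:+: u :=
    hyinf.trans (hwyv.trans hvu)
  obtain ⟨s2, t2, h2⟩ := hfin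
  set yw : List Bool := List.ofFn fun i : Fin (2 * n + 1) => y (-(n : ℤ) + (i : ℕ)) with hywdef
  have h2' : s2 ++ (yw ++ t2) = u := by rw [← List.append_assoc]; exact h2
  have hlen2 : s2.length + (2 * n + 1) + t2.length = 2 * l := by
    have h0 := congrArg List.length h2
    simp [hulen, hywdef] at h0
    omega
  have hpt : ∀ i : ℕ, i < 2 * n + 1 →
      y (-(n : ℤ) + (i : ℕ)) = x (0 + ((s2.length + i : ℕ) : ℤ)) := by
    intro i hi
    have hywlen : yw.length = 2 * n + 1 := by simp [hywdef]
    have hidx : s2.length + i < u.length := by omega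
    have hidx2 : s2.length + i < (s2 ++ (yw ++ t2)).length := by rw [h2']; exact hidx
    have e1 : (s2 ++ (yw ++ t2))[s2.length + i]'hidx2 = u[s2.length + i]'hidx :=
      List.getElem_of_eq h2' _
    have e2 : (s2 ++ (yw ++ t2))[s2.length + i]'hidx2
        = (yw ++ t2)[i]'(by simp [hywlen]; omega) := by
      rw [List.getElem_append_right (Nat.le_add_right _ _)]
      simp
    have e3 : (yw ++ t2)[i]'(by simp [hywlen]; omega) = yw[i]'(by omega) :=
      List.getElem_append_left (by omega)
    have e4 : yw[i]'(by omega) = y (-(n : ℤ) + (i : ℕ)) := by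
      simp only [hywdef, List.getElem_ofFn]
    have e5 : u[s2.length + i]'hidx = x (0 + ((s2.length + i : ℕ) : ℤ)) := by
      simp only [hudef, List.getElem_ofFn]
    rw [← e4, ← e3, ← e2, e1, e5]
  refine ⟨(s2.length : ℤ) + n, ?_⟩
  intro i hi1 hi2
  have hi3 : (i + n).toNat < 2 * n + 1 := by omega
  have := hpt (i + n).toNat hi3
  have hcast : (((i + n).toNat : ℕ) : ℤ) = i + n := by omega
  rw [hcast] at this
  have h1 : -(n : ℤ) + (i + n) = i := by ring
  rw [h1] at this
  have h2' : (0 : ℤ) + ((s2.length + (i + n).toNat : ℕ) : ℤ) = i + ((s2.length : ℤ) + n) := by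
    push_cast
    omega
  rw [h2'] at this
  exact this.symm

/-- The subshift `X` of the Construction is minimal. -/
theorem statement2 (c : Construction) : IsMinimal c.space := by
  intro x hx y hy
  have key := fun n : ℕ => key_lemma c hx hy n
  choose k hk using key
  refine mem_closure_of_tendsto (f := fun n : ℕ => shiftZ (k n) x) (b := Filter.atTop) ?_ ?_
  · rw [tendsto_pi_nhds]
    intro i
    refine Filter.Tendsto.congr' ?_ (tendsto_const_nhds (x := y i))
    filter_upwards [Filter.eventually_ge_atTop i.natAbs] with n hn
    exact (hk n i (by omega) (by omega)).symm
  · exact Filter.Eventually.of_forall fun n => ⟨k n, rfl⟩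

end EntDim
end

section
/- lim_{j→∞} (log N_j)/√(l_j) = 0. -/
open Filter MeasureTheory Topology

namespace EntDim

/-- `lim_{j→∞} (log N_j)/√(l_j) = 0`. -/
theorem statement4 (l1 : ℕ) (hl1 : 0 < l1) :
    Tendsto (fun j : ℕ => Real.log (Nseq l1 j) / Real.sqrt (lseq l1 j)) atTop (nhds 0) := by

  set r : ℕ → ℝ := fun j => Real.log (Nseq l1 j) / Real.sqrt (lseq l1 j) with hr
  have hN : ∀ j : ℕ, 1 ≤ Nseq l1 (j + 1) := by
    intro j
    induction j with
    | zero => simpa [Nseq, lN] using Nat.one_le_two_pow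
    | succ k ih =>
      show 1 ≤ Nseq l1 (k + 2)
      simp only [Nseq, lN]
      exact Nat.factorial_pos _
  have hl : ∀ j : ℕ, 1 ≤ lseq l1 (j + 1) := by
    intro j
    induction j with
    | zero => simpa [lseq, lN] using Nat.one_le_iff_ne_zero.2 hl1.ne'
    | succ k ih =>
      show 1 ≤ lseq l1 (k + 2)
      simp only [lseq, lN]
      exact Nat.one_le_iff_ne_zero.2 (Nat.mul_ne_zero (Nat.one_le_iff_ne_zero.1 ih) (Nat.one_le_iff_ne_zero.1 (hN k)))
  have hpos : ∀ j : ℕ, 0 ≤ r (j + 1) := by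
    intro j
    exact div_nonneg (Real.log_nonneg (by exact_mod_cast hN j)) (Real.sqrt_nonneg _)
  have hstep : ∀ j : ℕ, r (j + 2) ≤ r (j + 1) / 2 := by
    intro j
    set N := Nseq l1 (j + 1) with hNdef
    set l := lseq l1 (j + 1) with hldef
    have hN1 : 1 ≤ N := hN j
    have hl1' : 1 ≤ l := hl j
    set s := Nat.sqrt N with hsdef
    have hs1 : 1 ≤ s := by
      have := Nat.sqrt_pos.mpr (by omega : 0 < N)
      omega
    have hNval : Nseq l1 (j + 2) = Nat.factorial s := by
      simp only [Nseq, lN, hsdef, hNdef]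
    have hlval : lseq l1 (j + 2) = l * N := by
      simp only [lseq, Nseq, lN, hldef, hNdef]
    have hsqrtN : (0 : ℝ) < Real.sqrt N := Real.sqrt_pos.2 (by exact_mod_cast hN1)
    have hsqrtl : (0 : ℝ) < Real.sqrt l := Real.sqrt_pos.2 (by exact_mod_cast hl1')
    -- log (s!) ≤ √N * (log N / 2)
    have h1 : (Nat.factorial s : ℝ) ≤ (s : ℝ) ^ s := by
      exact_mod_cast Nat.factorial_le_pow s
    have h2 : Real.log (Nat.factorial s) ≤ (s : ℝ) * Real.log s := by
      calc Real.log (Nat.factorial s) ≤ Real.log ((s : ℝ) ^ s) :=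
            Real.log_le_log (by exact_mod_cast Nat.factorial_pos s) h1
        _ = (s : ℝ) * Real.log s := by rw [Real.log_pow]
    have h3 : (s : ℝ) ≤ Real.sqrt N := by
      rw [show (s : ℝ) = Real.sqrt ((s : ℝ) ^ 2) by
        rw [Real.sqrt_sq (by positivity)]]
      apply Real.sqrt_le_sqrt
      exact_mod_cast Nat.sqrt_le' N
    have h4 : Real.log s ≤ Real.log N / 2 := by
      calc Real.log s ≤ Real.log (Real.sqrt N) :=
            Real.log_le_log (by exact_mod_cast hs1) h3
        _ = Real.log N / 2 := Real.log_sqrt (by positivity)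
    have hlogs : (0 : ℝ) ≤ Real.log s := Real.log_nonneg (by exact_mod_cast hs1)
    have h5 : Real.log (Nat.factorial s) ≤ Real.sqrt N * (Real.log N / 2) :=
      h2.trans (mul_le_mul h3 h4 hlogs (Real.sqrt_nonneg _))
    have hsplit : Real.sqrt ((l : ℕ) * N : ℕ) = Real.sqrt l * Real.sqrt N := by
      push_cast
      exact Real.sqrt_mul (by positivity) _
    show Real.log (Nseq l1 (j + 2)) / Real.sqrt (lseq l1 (j + 2)) ≤
      Real.log N / Real.sqrt l / 2
    rw [hNval, hlval, hsplit]
    calc Real.log (Nat.factorial s) / (Real.sqrt l * Real.sqrt N)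
        ≤ Real.sqrt N * (Real.log N / 2) / (Real.sqrt l * Real.sqrt N) := by
          gcongr
      _ = Real.log N / Real.sqrt l / 2 := by
          field_simp
  have hgeo : ∀ j : ℕ, r (j + 1) ≤ r 1 * (1 / 2) ^ j := by
    intro j
    induction j with
    | zero => simp
    | succ k ih =>
      calc r (k + 2) ≤ r (k + 1) / 2 := hstep k
        _ ≤ r 1 * (1 / 2) ^ k / 2 := by linarith
        _ = r 1 * (1 / 2) ^ (k + 1) := by ring
  rw [← Filter.tendsto_add_atTop_iff_nat 1]
  apply squeeze_zero hpos hgeo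
  have : Tendsto (fun j : ℕ => r 1 * (1 / 2 : ℝ) ^ j) atTop (nhds (r 1 * 0)) :=
    (tendsto_pow_atTop_nhds_zero_of_lt_one (by norm_num) (by norm_num)).const_mul _
  simpa using this


end EntDim
end

section
/- In the Marker variant, for j ≥ 1 and x ∈ X let t_{j+1}(x) ∈ {0, …, l_{j+1}−1} be the unique offset such that x_{m·l_{j+1} − t_{j+1}(x)} ⋯ x_{(m+1)·l_{j+1} − t_{j+1}(x) − 1} ∈ C_{j+1} for all m ∈ ℤ, and let L_j = {x ∈ X : ⌊t_{j+1}(x)/l_j⌋ + 1 ∈ P_j} (the set of points whose C_j-block containing coordinate 0 sits at a permuted position). Then μ(L_j) = ⌊√N_j⌋ / N_j. -/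
open Filter MeasureTheory Topology

namespace EntDim

section Ch1
variable {l1 : ℕ}

lemma lseq_succ (l1 j : ℕ) (hj : 1 ≤ j) : lseq l1 (j+1) = lseq l1 j * Nseq l1 j := by
  obtain ⟨k, rfl⟩ := Nat.exists_eq_add_of_le hj
  rw [Nat.add_comm 1 k]
  rfl

lemma Nseq_succ (l1 j : ℕ) (hj : 1 ≤ j) :
    Nseq l1 (j+1) = (Nat.sqrt (Nseq l1 j)).factorial := by
  obtain ⟨k, rfl⟩ := Nat.exists_eq_add_of_le hj
  rw [Nat.add_comm 1 k]
  rfl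

lemma Npos (l1 : ℕ) : ∀ j, 1 ≤ j → 1 ≤ Nseq l1 j := by
  intro j hj
  induction j with
  | zero => omega
  | succ n ih =>
    rcases Nat.eq_or_lt_of_le hj with h | h
    · simp [Nseq, lN, ← h]
      exact Nat.one_le_two_pow
    · rw [Nseq_succ l1 n (by omega)]
      exact Nat.one_le_iff_ne_zero.mpr (Nat.factorial_ne_zero _)

lemma lpos (h1 : 0 < l1) : ∀ j, 1 ≤ j → 0 < lseq l1 j := by
  intro j hj
  induction j with
  | zero => omega
  | succ n ih =>
    rcases Nat.eq_or_lt_of_le hj with h | h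
    · simpa [lseq, lN, ← h] using h1
    · rw [lseq_succ l1 n (by omega)]
      exact Nat.mul_pos (ih (by omega)) (Npos l1 n (by omega))

lemma lseq_dvd (l1 : ℕ) : ∀ j k, 1 ≤ j → j ≤ k → lseq l1 j ∣ lseq l1 k := by
  intro j k hj hjk
  induction k with
  | zero => omega
  | succ n ih =>
    rcases Nat.eq_or_lt_of_le hjk with h | h
    · rw [h]
    · rw [lseq_succ l1 n (by omega)]
      exact Dvd.dvd.mul_right (ih (by omega)) _

lemma lseq_mono_s11 (l1 : ℕ) : ∀ j k, 1 ≤ j → j ≤ k → lseq l1 j ≤ lseq l1 k := by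
  intro j k hj hjk
  induction k with
  | zero => omega
  | succ n ih =>
    rcases Nat.eq_or_lt_of_le hjk with h | h
    · rw [h]
    · rw [lseq_succ l1 n (by omega)]
      calc lseq l1 j ≤ lseq l1 n := ih (by omega)
        _ ≤ lseq l1 n * Nseq l1 n := Nat.le_mul_of_pos_right _ (Npos l1 n (by omega))

lemma flatten_length' {α : Type*} (L : List (List α)) (ℓ : ℕ) (h : ∀ u ∈ L, u.length = ℓ) :
    L.flatten.length = L.length * ℓ := by
  induction L with
  | nil => simp
  | cons u T ih =>
    simp only [List.flatten_cons, List.length_append, List.length_cons,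
      ih (fun v hv => h v (by simp [hv])), h u (by simp)]
    ring

lemma flatten_block {α : Type*} (L : List (List α)) (ℓ : ℕ) (h : ∀ u ∈ L, u.length = ℓ) :
    ∀ (r : ℕ) (hr : r < L.length), (L.flatten.drop (r * ℓ)).take ℓ = L.get ⟨r, hr⟩ := by
  induction L with
  | nil => intro r hr; simp at hr
  | cons u T ih =>
    intro r hr
    cases r with
    | zero =>
      simp only [Nat.zero_mul, List.drop_zero, List.flatten_cons]
      rw [← h u (by simp)]
      simp [List.take_left]
    | succ n =>
      have hu : u.length = ℓ := h u (by simp)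
      have : ((u :: T).flatten.drop ((n+1) * ℓ)) = T.flatten.drop (n * ℓ) := by
        rw [List.flatten_cons, Nat.succ_mul, Nat.add_comm, ← hu, List.drop_length_add_append]
      rw [this]
      exact ih (fun v hv => h v (by simp [hv])) n (by simpa using hr)
/-- The word of length `l` read in `x` starting at position `p`. -/
def blockOf (x : ℤ → Bool) (l : ℕ) (p : ℤ) : List Bool := List.ofFn fun i : Fin l => x (p + (i : ℕ))

/-- `t` is a valid offset for the decomposition of `x` into `C J`-words. -/
def IsDecomp (c : Construction) (J t : ℕ) (x : ℤ → Bool) : Prop :=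
  t < lseq c.l1 J ∧ ∀ m : ℤ, blockOf x (lseq c.l1 J) (m * (lseq c.l1 J : ℤ) - (t : ℤ)) ∈ c.C J

lemma blockOf_length (x : ℤ → Bool) (l : ℕ) (p : ℤ) : (blockOf x l p).length = l := by
  simp [blockOf]

lemma blockOf_get (x : ℤ → Bool) (l : ℕ) (p : ℤ) (i : ℕ) (hi : i < (blockOf x l p).length) :
    (blockOf x l p).get ⟨i, hi⟩ = x (p + i) := by
  simp [blockOf]

lemma not_permuted_one (N : ℕ) : ¬ PermutedIdx N 1 := by
  rintro (h | ⟨m, hm2, _, hm⟩)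
  · omega
  · have : 2 ^ 2 ≤ m ^ 2 := Nat.pow_le_pow_left hm2 2
    simp [pow_two] at this hm
    omega

lemma Construction.C_length_pos (c : Construction) {j : ℕ} (hj : 1 ≤ j) : 0 < (c.C j).length := by
  rw [c.length_eq j hj]; exact Npos c.l1 j hj

/-- Structural facts about a word of `C (j+1)` obtained from `mem_succ`. -/
lemma Construction.mem_succ_block (c : Construction) {j : ℕ} (hj : 1 ≤ j) {w : List Bool}
    (hw : w ∈ c.C (j+1)) :
    (∀ r : ℕ, r < Nseq c.l1 j →
      (w.drop (r * lseq c.l1 j)).take (lseq c.l1 j) ∈ c.C j) ∧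
    w.take (lseq c.l1 j) = (c.C j).get ⟨0, c.C_length_pos hj⟩ ∧
    (∀ r : ℕ, r < Nseq c.l1 j →
      (w.drop (r * lseq c.l1 j)).take (lseq c.l1 j) = (c.C j).get ⟨0, c.C_length_pos hj⟩ →
      r = 0) := by
  obtain ⟨τ, hfix, -, rfl⟩ := (c.mem_succ j hj w).mp hw
  set l := lseq c.l1 j with hl
  set Lb : List (List Bool) := List.ofFn fun i : Fin (c.C j).length => (c.C j).get (τ i) with hLb
  have hlen : ∀ u ∈ Lb, u.length = l := by
    intro u hu
    rw [List.mem_ofFn] at hu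
    obtain ⟨i, rfl⟩ := hu
    exact c.wordLength j hj _ (List.get_mem _ _)
  have hLblen : Lb.length = Nseq c.l1 j := by
    rw [hLb, List.length_ofFn, c.length_eq j hj]
  have hblock : ∀ (r : ℕ) (hr : r < Nseq c.l1 j),
      (Lb.flatten.drop (r * l)).take l = (c.C j).get (τ ⟨r, by rw [c.length_eq j hj]; exact hr⟩) := by
    intro r hr
    rw [flatten_block Lb l hlen r (by omega)]
    simp [hLb]
  have htau0 : τ ⟨0, c.C_length_pos hj⟩ = ⟨0, c.C_length_pos hj⟩ :=
    hfix _ (by simpa using not_permuted_one (Nseq c.l1 j))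
  refine ⟨?_, ?_, ?_⟩
  · intro r hr
    rw [hblock r hr]
    exact List.get_mem _ _
  · have h0 : (0:ℕ) < Nseq c.l1 j := Npos c.l1 j hj
    have := hblock 0 h0
    simpa [htau0] using this
  · intro r hr hEq
    rw [hblock r hr] at hEq
    have hτ : τ ⟨r, by rw [c.length_eq j hj]; exact hr⟩ = ⟨0, c.C_length_pos hj⟩ :=
      (List.Nodup.get_inj_iff (c.nodup j hj)).mp hEq
    have : (⟨r, by rw [c.length_eq j hj]; exact hr⟩ : Fin (c.C j).length)
        = ⟨0, c.C_length_pos hj⟩ := τ.injective (by rw [hτ, htau0])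
    simpa using congrArg Fin.val this

/-- Aligned `C J`-blocks of words of `C k`, `k ≥ J`. -/
lemma Construction.block_at_level (c : Construction) {J : ℕ} (hJ : 1 ≤ J) : ∀ k, J ≤ k →
    ∀ w ∈ c.C k, ∀ q : ℕ,
    (q+1) * lseq c.l1 J ≤ lseq c.l1 k →
    (w.drop (q * lseq c.l1 J)).take (lseq c.l1 J) ∈ c.C J := by
  intro k
  induction k with
  | zero => intro h; omega
  | succ n ih =>
    intro hJk w hw q hq
    have hlpos : 0 < lseq c.l1 J := lpos c.hl1 J hJ
    rcases Nat.eq_or_lt_of_le hJk with h | h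
    · -- k = J
      subst h
      have hq0 : q = 0 := by nlinarith
      subst hq0
      have := c.wordLength _ (by omega) w hw
      simp only [Nat.zero_mul, List.drop_zero]
      rw [List.take_of_length_le (by omega)]
      exact hw
    · -- n ≥ J
      have hn : J ≤ n := by omega
      have hn1 : 1 ≤ n := le_trans hJ hn
      rw [lseq_succ c.l1 n hn1] at hq
      set l := lseq c.l1 J with hldef
      set L := lseq c.l1 n with hLdef
      set N := Nseq c.l1 n with hNdef
      have hLpos : 0 < L := lpos c.hl1 n hn1
      obtain ⟨e, hE⟩ : l ∣ L := lseq_dvd c.l1 J n hJ hn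
      have hepos : 0 < e := by
        rcases Nat.eq_zero_or_pos e with h0 | h0
        · rw [h0, Nat.mul_zero] at hE; omega
        · exact h0
      set r := q / e with hr
      set s := q % e with hs
      have hse : s < e := Nat.mod_lt _ hepos
      have hql : q * l = r * L + s * l := by
        rw [hE]
        have hqes : q = e * r + s := (Nat.div_add_mod q e).symm
        calc q * l = (e * r + s) * l := by rw [← hqes]
          _ = r * (l * e) + s * l := by ring
      have hrN : r < N := by
        have h1 : q * l < L * N := by nlinarith
        have h2 : l * q < l * (e * N) := by
          rw [hE] at h1; nlinarith
        have h3 : q < e * N := Nat.lt_of_mul_lt_mul_left h2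
        exact Nat.div_lt_of_lt_mul (by omega)
      have hsl : s * l + l ≤ L := by
        rw [hE]; nlinarith
      have hblockn : (w.drop (r * L)).take L ∈ c.C n := (c.mem_succ_block hn1 hw).1 r hrN
      have key : (w.drop (q * l)).take l
          = (((w.drop (r * L)).take L).drop (s * l)).take l := by
        rw [List.drop_take, List.drop_drop, List.take_take]
        have hmin : min l (L - s * l) = l := min_eq_left (Nat.le_sub_of_add_le (by omega))
        rw [hmin, hql]
      rw [key]
      exact ih hn _ hblockn s (by rw [Nat.add_mul, Nat.one_mul]; exact hsl)

lemma Construction.exists_infix_succ (c : Construction) {k : ℕ} (hk : 1 ≤ k) {w : List Bool}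
    (hw : w ∈ c.C k) :
    ∃ w' ∈ c.C (k+1), w <:+: w' := by
  have hne : (c.C (k+1)) ≠ [] := by
    have := c.C_length_pos (j := k+1) (by omega)
    exact List.ne_nil_of_length_pos this
  obtain ⟨w', hw'⟩ := List.exists_mem_of_ne_nil _ hne
  refine ⟨w', hw', ?_⟩
  obtain ⟨τ, -, -, rfl⟩ := (c.mem_succ k hk w').mp hw'
  apply List.infix_of_mem_flatten
  rw [List.mem_ofFn]
  obtain ⟨m, hm⟩ := List.get_of_mem hw
  exact ⟨τ.symm m, by simpa using hm⟩

lemma Construction.infix_raise (c : Construction) {v : List Bool} {k : ℕ} (hk : 1 ≤ k)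
    {w : List Bool} (hw : w ∈ c.C k)
    (hv : v <:+: w) : ∀ K, k ≤ K → ∃ w' ∈ c.C K, v <:+: w' := by
  intro K
  induction K with
  | zero => intro h; exact absurd (le_trans hk h) (by omega)
  | succ n ih =>
    intro hkn
    rcases Nat.eq_or_lt_of_le hkn with h | h
    · exact ⟨w, h ▸ hw, hv⟩
    · obtain ⟨w', hw', hvw'⟩ := ih (by omega)
      obtain ⟨w'', hw'', h2⟩ := c.exists_infix_succ (by omega) hw'
      exact ⟨w'', hw'', hvw'.trans h2⟩
lemma prefix_get {α : Type*} {u w : List α} (h : u <+: w) (i : ℕ) (hi : i < u.length)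
    (hiw : i < w.length) : w.get ⟨i, hiw⟩ = u.get ⟨i, hi⟩ := by
  obtain ⟨s, rfl⟩ := h
  simp [List.get_eq_getElem, List.getElem_append_left hi]

lemma prefix_pair {α : Type*} {a b : α} {L : List α} (hL : 2 ≤ L.length)
    (h0 : L.get ⟨0, by omega⟩ = a) (h1 : L.get ⟨1, by omega⟩ = b) : [a, b] <+: L := by
  match L with
  | x :: y :: rest =>
    simp only [List.get] at h0 h1
    subst h0; subst h1
    exact ⟨rest, rfl⟩

lemma blockOf_sub (x : ℤ → Bool) {L l o : ℕ} (P : ℤ) (hrl : o + l ≤ L) :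
    ((blockOf x L P).drop o).take l = blockOf x l (P + (o : ℕ)) := by
  apply List.ext_get
  · simp [blockOf]; omega
  · intro i h1 h2
    have hi : i < l := by simpa [blockOf] using h2
    have h3 : o + i < L := by omega
    simp only [blockOf, List.get_eq_getElem, List.getElem_take, List.getElem_drop,
      List.getElem_ofFn]
    congr 1
    push_cast
    ring

lemma blockOf_take (x : ℤ → Bool) {L l : ℕ} (P : ℤ) (hl : l ≤ L) :
    (blockOf x L P).take l = blockOf x l P := by
  have := blockOf_sub x (L := L) (l := l) (o := 0) P (by omega)
  simpa using this

lemma blockOf_drop_get (x : ℤ → Bool) {l : ℕ} (p : ℤ) (r i : ℕ) (h : r + i < l) (hh) :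
    ((blockOf x l p).drop r).get ⟨i, hh⟩ = x (p + r + i) := by
  simp only [blockOf, List.get_eq_getElem, List.getElem_drop, List.getElem_ofFn]
  congr 1
  push_cast
  ring

section Marker
variable (c : MarkerConstruction)

lemma MarkerConstruction.l1_ge3 : 3 ≤ lseq c.l1 1 := by
  have hne : (c.C 1) ≠ [] :=
    List.ne_nil_of_length_pos (c.toConstruction.C_length_pos (le_refl 1))
  obtain ⟨w, hw⟩ := List.exists_mem_of_ne_nil _ hne
  have h1 := c.marker_prefix w hw
  have h2 := c.toConstruction.wordLength 1 (le_refl 1) w hw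
  have := h1.length_le
  simp at this
  omega

lemma MarkerConstruction.block_vals {x : ℤ → Bool} {p : ℤ}
    (h : blockOf x (lseq c.l1 1) p ∈ c.C 1) :
    x p = false ∧ x (p+1) = false ∧ x (p+2) = true := by
  have hl := c.l1_ge3
  have hpre := c.marker_prefix _ h
  have hlen : (blockOf x (lseq c.l1 1) p).length = lseq c.l1 1 := blockOf_length _ _ _
  refine ⟨?_, ?_, ?_⟩
  · have := prefix_get hpre 0 (by simp) (by omega)
    rw [blockOf_get] at this
    simpa using this
  · have := prefix_get hpre 1 (by simp) (by omega)
    rw [blockOf_get] at this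
    simpa using this
  · have := prefix_get hpre 2 (by simp) (by omega)
    rw [blockOf_get] at this
    simpa using this

/-- Decomposition of an integer by a positive natural modulus. -/
lemma int_div_decomp (u : ℤ) (N : ℕ) (hN : 0 < N) :
    ∃ (M : ℤ) (r : ℕ), r < N ∧ u = M * N + r := by
  have hNz : ((N:ℤ)) ≠ 0 := by exact_mod_cast hN.ne'
  have h1 : 0 ≤ u % (N:ℤ) := Int.emod_nonneg _ hNz
  have h2 : u % (N:ℤ) < N := Int.emod_lt_of_pos _ (by exact_mod_cast hN)
  refine ⟨u / N, (u % N).toNat, by omega, ?_⟩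
  rw [Int.toNat_of_nonneg h1]
  linear_combination -(Int.mul_ediv_add_emod u (N:ℤ))

/-- In a level-1 decomposition, the marker `001` occurs only at grid positions. -/
lemma MarkerConstruction.marker_pos {x : ℤ → Bool} {t : ℕ}
    (hd : IsDecomp c.toConstruction 1 t x) {p : ℤ}
    (h0 : x p = false) (h1 : x (p+1) = false) (h2 : x (p+2) = true) :
    ((lseq c.l1 1 : ℤ)) ∣ (p + t) := by
  have hl : 3 ≤ lseq c.l1 1 := c.l1_ge3
  obtain ⟨M, r, hrl, hMr⟩ := int_div_decomp (p + t) (lseq c.l1 1) (by omega)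
  have hp : p = M * (lseq c.l1 1 : ℤ) - t + r := by linear_combination hMr
  suffices hr : r = 0 by
    refine ⟨M, ?_⟩
    rw [hMr, hr]
    push_cast
    ring
  by_contra hrne
  have hWm := hd.2 M
  rcases Nat.lt_or_ge r (lseq c.l1 1 - 1) with hcase | hcase
  · -- 00 occurs inside block M at position r > 0
    have happ := c.marker_unique _ hWm r
    have hlen : ((blockOf x (lseq c.l1 1) (M * (lseq c.l1 1 : ℤ) - t)).drop r).length
        = lseq c.l1 1 - r := by
      simp [blockOf]
    have g0 : ((blockOf x (lseq c.l1 1) (M * (lseq c.l1 1 : ℤ) - t)).drop r).get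
        ⟨0, by rw [hlen]; omega⟩ = false := by
      rw [blockOf_drop_get x _ r 0 (by omega)]
      have hq : M * ((lseq c.l1 1 : ℕ) : ℤ) - ↑t + ↑r + ((0:ℕ):ℤ) = p := by
        push_cast
        linear_combination -hp
      rw [hq, h0]
    have g1 : ((blockOf x (lseq c.l1 1) (M * (lseq c.l1 1 : ℤ) - t)).drop r).get
        ⟨1, by rw [hlen]; omega⟩ = false := by
      rw [blockOf_drop_get x _ r 1 (by omega)]
      have hq : M * ((lseq c.l1 1 : ℕ) : ℤ) - ↑t + ↑r + ((1:ℕ):ℤ) = p + 1 := by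
        push_cast
        linear_combination -hp
      rw [hq, h1]
    have h2le : 2 ≤ ((blockOf x (lseq c.l1 1) (M * (lseq c.l1 1 : ℤ) - t)).drop r).length := by
      rw [hlen]; omega
    exact hrne (happ (prefix_pair h2le g0 g1))
  · -- r = lseq - 1 : then x (p+2) is the second letter of block M+1, hence false
    have hreq : r = lseq c.l1 1 - 1 := by omega
    have hWm1 := hd.2 (M + 1)
    obtain ⟨-, hb1, -⟩ := c.block_vals hWm1
    have hkey : (M+1) * ((lseq c.l1 1 : ℕ) : ℤ) - ↑t + 1 = p + 2 := by
      have hrc : (r : ℤ) = (lseq c.l1 1 : ℤ) - 1 := by omega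
      linear_combination -hp - hrc
    rw [hkey, h2] at hb1
    simp at hb1

lemma MarkerConstruction.unique_t1 {x : ℤ → Bool} {t t' : ℕ}
    (h : IsDecomp c.toConstruction 1 t x) (h' : IsDecomp c.toConstruction 1 t' x) : t = t' := by
  set l := lseq c.l1 1 with hldef
  have hW0 := h'.2 0
  have h00 : (0:ℤ) * l - t' = -(t':ℤ) := by ring
  rw [h00] at hW0
  obtain ⟨g0, g1, g2⟩ := c.block_vals hW0
  have hdvd := c.marker_pos h (p := -(t':ℤ))
    (by simpa using g0) (by simpa using g1) (by simpa using g2)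
  obtain ⟨k, hk⟩ := hdvd
  have h1 : t < l := h.1
  have h2 : t' < l := h'.1
  have hlz : (0:ℤ) < (l:ℤ) := by exact_mod_cast (lpos c.hl1 1 (le_refl 1))
  have hk0 : k = 0 := by
    rcases lt_trichotomy k 0 with hc | hc | hc
    · nlinarith [hk]
    · exact hc
    · nlinarith [hk]
  rw [hk0, mul_zero] at hk
  omega

end Marker

/-- Refinement: a level `J+1` decomposition induces a level `J` decomposition. -/
lemma IsDecomp.refine {c : Construction} {J t : ℕ} {x : ℤ → Bool} (hJ : 1 ≤ J)
    (h : IsDecomp c (J+1) t x) : IsDecomp c J (t % lseq c.l1 J) x := by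
  set l := lseq c.l1 J with hldef
  set N := Nseq c.l1 J with hNdef
  have hL : lseq c.l1 (J+1) = l * N := lseq_succ c.l1 J hJ
  have hlpos : 0 < l := lpos c.hl1 J hJ
  have hNpos : 0 < N := Npos c.l1 J hJ
  refine ⟨Nat.mod_lt _ hlpos, ?_⟩
  intro m
  obtain ⟨M, r, hrn, huMr⟩ := int_div_decomp (m + (t / l : ℕ)) N hNpos
  have hW := h.2 M
  have hsub := (c.mem_succ_block hJ hW).1 r hrn
  have hrl : r * l + l ≤ lseq c.l1 (J+1) := by rw [hL]; nlinarith
  rw [blockOf_sub x _ hrl] at hsub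
  have hC : (l:ℤ) * ((t/l : ℕ) : ℤ) + ((t % l : ℕ) : ℤ) = (t:ℤ) := by
    exact_mod_cast Nat.div_add_mod t l
  have hcast : ((lseq c.l1 (J+1) : ℕ) : ℤ) = (l : ℤ) * N := by exact_mod_cast hL
  have heq : M * ((lseq c.l1 (J+1) : ℕ) : ℤ) - t + ((r * l : ℕ) : ℤ)
      = m * (l:ℤ) - ((t % l : ℕ) : ℤ) := by
    rw [hcast, Nat.cast_mul]
    linear_combination -(l:ℤ) * huMr + hC
  rw [heq] at hsub
  exact hsub
/-- Uniqueness of the decomposition offset at every level (Marker variant). -/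
lemma MarkerConstruction.unique_t (c : MarkerConstruction) :
    ∀ J, 1 ≤ J → ∀ (x : ℤ → Bool) (t t' : ℕ),
    IsDecomp c.toConstruction J t x → IsDecomp c.toConstruction J t' x → t = t' := by
  intro J
  induction J with
  | zero => omega
  | succ n ih =>
    intro hn1 x t t' h h'
    rcases n.eq_zero_or_pos with rfl | hnn
    · exact c.unique_t1 h h'
    · have hmod : t % lseq c.l1 n = t' % lseq c.l1 n :=
        ih hnn x _ _ (h.refine hnn) (h'.refine hnn)
      set l := lseq c.l1 n with hldef
      set N := Nseq c.l1 n with hNdef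
      have hlpos : 0 < l := lpos c.hl1 n hnn
      have hNpos : 0 < N := Npos c.l1 n hnn
      have hLeq : lseq c.l1 (n+1) = l * N := lseq_succ c.l1 n hnn
      have hcast : ((lseq c.l1 (n+1) : ℕ) : ℤ) = (l:ℤ) * N := by exact_mod_cast hLeq
      have hLpos : 0 < lseq c.l1 (n+1) := lpos c.hl1 (n+1) (by omega)
      obtain ⟨d, hd⟩ : ((l:ℕ) : ℤ) ∣ ((t' : ℤ) - t) := Nat.ModEq.dvd hmod
      obtain ⟨M, r, hrN, hMr⟩ := int_div_decomp d N hNpos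
      -- the block of the t-grid at position -t starts with the head word
      have hW := h.2 0
      have hE1 : blockOf x l ((0:ℤ) * (lseq c.l1 (n+1) : ℤ) - t)
          = (c.C n).get ⟨0, c.toConstruction.C_length_pos hnn⟩ := by
        rw [← blockOf_take x _ (show l ≤ lseq c.l1 (n+1) by rw [hLeq]; nlinarith)]
        exact (c.toConstruction.mem_succ_block hnn hW).2.1
      -- the corresponding sub-block of the t'-grid
      have hW' := h'.2 M
      have hrl : r * l + l ≤ lseq c.l1 (n+1) := by rw [hLeq]; nlinarith
      have hsub := (c.toConstruction.mem_succ_block hnn hW').2.2 r hrN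
      rw [blockOf_sub x _ hrl] at hsub
      have hpos : M * ((lseq c.l1 (n+1) : ℕ) : ℤ) - t' + ((r * l : ℕ) : ℤ)
          = (0:ℤ) * (lseq c.l1 (n+1) : ℤ) - t := by
        rw [hcast, Nat.cast_mul]
        linear_combination -hd - (l:ℤ) * hMr
      rw [hpos, hE1] at hsub
      have hr0 : r = 0 := hsub rfl
      -- now t ≡ t' mod lseq (n+1), and both are < lseq (n+1)
      have hfin : (t' : ℤ) - t = ((lseq c.l1 (n+1) : ℕ) : ℤ) * M := by
        rw [hcast]
        have : (r : ℤ) = 0 := by exact_mod_cast congrArg (Nat.cast : ℕ → ℤ) hr0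
        linear_combination hd + (l:ℤ) * hMr + (l:ℤ) * this
      have h1 : t < lseq c.l1 (n+1) := h.1
      have h2 : t' < lseq c.l1 (n+1) := h'.1
      have hLz : (0:ℤ) < ((lseq c.l1 (n+1) : ℕ) : ℤ) := by exact_mod_cast hLpos
      have hM0 : M = 0 := by
        by_contra hM
        have h4 : 1 ≤ |M| := Int.one_le_abs (by omega)
        have h5 : ((lseq c.l1 (n+1):ℕ):ℤ) ≤ |((lseq c.l1 (n+1):ℕ):ℤ) * M| := by
          rw [abs_mul, abs_of_nonneg (le_of_lt hLz)]
          exact le_mul_of_one_le_right (le_of_lt hLz) h4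
        rw [← hfin] at h5
        have h6 : |(t':ℤ) - t| < ((lseq c.l1 (n+1):ℕ):ℤ) := by
          rw [abs_lt]
          constructor <;> omega
        linarith [h5, h6]
      rw [hM0, mul_zero] at hfin
      omega
/-- Local decompositions exist on every finite window. -/
lemma Construction.local_decomp (c : Construction) {x : ℤ → Bool} (hx : x ∈ c.space)
    {J : ℕ} (hJ : 1 ≤ J) (n : ℕ) :
    ∃ t < lseq c.l1 J, ∀ m : ℤ, -(n:ℤ) ≤ m → m ≤ n →
      blockOf x (lseq c.l1 J) (m * (lseq c.l1 J : ℤ) - t) ∈ c.C J := by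
  set l := lseq c.l1 J with hldef
  have hlpos : 0 < l := lpos c.hl1 J hJ
  set Len := (2*n+2) * l with hLen
  set a : ℤ := -(((n+1 : ℕ) : ℤ) * l) with ha
  obtain ⟨j₀, hj₀, w₀, hw₀, hinf⟩ := hx a Len
  obtain ⟨w, hwk, hinfix⟩ := c.infix_raise hj₀ hw₀ hinf (max J j₀) (le_max_right _ _)
  have hkJ : J ≤ max J j₀ := le_max_left _ _
  have hk1 : 1 ≤ max J j₀ := le_trans hJ hkJ
  have hB : (List.ofFn fun i : Fin Len => x (a + (i : ℕ))) = blockOf x Len a := rfl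
  rw [hB] at hinfix
  obtain ⟨pre, suf, rfl⟩ := hinfix
  set d := pre.length with hd
  refine ⟨d % l, Nat.mod_lt _ hlpos, ?_⟩
  intro m hm1 hm2
  have hmod : d % l < l := Nat.mod_lt _ hlpos
  set e : ℕ := (m + n + 1).toNat with he'
  have he : (e : ℤ) = m + n + 1 := Int.toNat_of_nonneg (by omega)
  have he1 : 1 ≤ e := by omega
  have he2 : e ≤ 2*n + 1 := by omega
  set q : ℕ := d / l + e with hq
  have hwlen : (pre ++ blockOf x Len a ++ suf).length = lseq c.l1 (max J j₀) :=
    c.wordLength _ hk1 _ hwk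
  have hlen2 : (pre ++ blockOf x Len a ++ suf).length = d + Len + suf.length := by
    simp [blockOf]
    omega
  have hA : (q + 1) * l ≤ lseq c.l1 (max J j₀) := by
    rw [← hwlen]
    rw [hlen2]
    have h1 : (d / l) * l ≤ d := Nat.div_mul_le_self d l
    have h2 : (q + 1) * l = (d/l)*l + (e+1)*l := by rw [hq]; ring
    have h3 : (e+1) * l ≤ Len := by
      rw [hLen]
      have : e + 1 ≤ 2*n+2 := by omega
      exact Nat.mul_le_mul_right _ this
    omega
  have hblk := c.block_at_level hJ _ hkJ _ hwk q hA
  -- identify the aligned block with the block of `x`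
  set off : ℕ := e * l - d % l with hoff
  have hoffl : e * l ≥ l := Nat.le_mul_of_pos_left _ he1
  have hql : q * l = d + off := by
    have h1 : d = l * (d / l) + d % l := (Nat.div_add_mod d l).symm
    have h2 : q * l = l * (d / l) + e * l := by rw [hq]; ring
    have h3 : d % l < l := Nat.mod_lt _ hlpos
    omega
  have hoffLen : off + l ≤ Len := by
    have h5 : (e+1) * l ≤ Len := by
      rw [hLen]
      exact Nat.mul_le_mul_right _ (by omega)
    have h4 : (e+1) * l = e * l + l := by ring
    have h3 : d % l < l := Nat.mod_lt _ hlpos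
    omega
  have hBlen : (blockOf x Len a).length = Len := blockOf_length _ _ _
  have key : ((pre ++ blockOf x Len a ++ suf).drop (q * l)).take l
      = ((blockOf x Len a).drop off).take l := by
    rw [hql, List.append_assoc, hd, List.drop_length_add_append, List.drop_append,
      List.take_append_of_le_length (by rw [List.length_drop, hBlen]; omega)]
  rw [key, blockOf_sub x (L := Len) (o := off) a hoffLen] at hblk
  have hpos : a + (off : ℕ) = m * (l:ℤ) - (d % l : ℕ) := by
    have hcast : ((off : ℕ) : ℤ) = (e:ℤ) * l - ((d % l : ℕ) : ℤ) := by
      rw [hoff, Nat.cast_sub (by omega : d % l ≤ e * l)]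
      push_cast
      ring
    rw [ha, hcast, he]
    push_cast
    ring
  rw [hpos] at hblk
  exact hblk
/-- Existence of a decomposition offset at every level, for points of the subshift. -/
lemma Construction.exists_decomp (c : Construction) {x : ℤ → Bool} (hx : x ∈ c.space)
    {J : ℕ} (hJ : 1 ≤ J) : ∃ t, IsDecomp c J t x := by
  have hlpos : 0 < lseq c.l1 J := lpos c.hl1 J hJ
  choose tc htl hts using c.local_decomp hx hJ
  let f : ℕ → Fin (lseq c.l1 J) := fun n => ⟨tc n, htl n⟩
  obtain ⟨t₀, ht₀⟩ := Finite.exists_infinite_fiber f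
  have hinf : Set.Infinite (f ⁻¹' {t₀}) := (Set.infinite_coe_iff (s := f ⁻¹' {t₀})).mp ht₀
  refine ⟨t₀.val, t₀.isLt, ?_⟩
  intro m
  obtain ⟨nn, hn1, hn2⟩ := hinf.exists_gt m.natAbs
  have hfn : tc nn = (t₀ : ℕ) := congrArg Fin.val (by exact hn1)
  have := hts nn m (by omega) (by omega)
  rw [hfn] at this
  exact this

lemma MarkerConstruction.tOffset_eq (c : MarkerConstruction) {x : ℤ → Bool} {J : ℕ} (hJ : 1 ≤ J)
    {t : ℕ} (ht : IsDecomp c.toConstruction J t x) :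
    c.toConstruction.tOffset J x = t := by
  have hset : { t' : ℕ | t' < lseq c.l1 J ∧ ∀ m : ℤ,
      (List.ofFn fun i : Fin (lseq c.l1 J) =>
        x (m * (lseq c.l1 J : ℤ) - (t' : ℤ) + (i : ℕ))) ∈ c.C J } = {t} := by
    ext t'
    simp only [Set.mem_setOf_eq, Set.mem_singleton_iff]
    constructor
    · intro h'
      exact c.unique_t J hJ x t' t ⟨h'.1, h'.2⟩ ht
    · rintro rfl
      exact ⟨ht.1, ht.2⟩
  show sInf _ = t
  rw [hset]
  exact csInf_singleton t

lemma Construction.shift_mem_space (c : Construction) (x : ℤ → Bool) :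
    shift x ∈ c.space ↔ x ∈ c.space := by
  have key : ∀ (y : ℤ → Bool) (a : ℤ) (n : ℕ),
      (List.ofFn fun i : Fin n => shift y (a + (i:ℕ))) =
      (List.ofFn fun i : Fin n => y ((a+1) + (i:ℕ))) := by
    intro y a n
    apply congrArg List.ofFn
    funext i
    simp only [shift]
    congr 1
    ring
  constructor <;> intro h a n
  · obtain ⟨j, hj, w, hw, hi⟩ := h (a - 1) n
    rw [key x (a-1) n] at hi
    refine ⟨j, hj, w, hw, ?_⟩
    have : a - 1 + 1 = a := by ring
    rwa [this] at hi
  · obtain ⟨j, hj, w, hw, hi⟩ := h (a + 1) n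
    refine ⟨j, hj, w, hw, ?_⟩
    rw [key x a n]
    exact hi

lemma blockOf_shift (x : ℤ → Bool) (l : ℕ) (p : ℤ) :
    blockOf (shift x) l p = blockOf x l (p + 1) := by
  apply congrArg List.ofFn
  funext i
  simp only [shift]
  congr 1
  ring

/-- The offset of the shifted point. -/
lemma IsDecomp.shift_offset {c : Construction} {J t : ℕ} {x : ℤ → Bool}
    (h : IsDecomp c J t x) :
    IsDecomp c J ((t + 1) % lseq c.l1 J) (shift x) := by
  have hl : 0 < lseq c.l1 J := by have := h.1; omega
  rcases Nat.lt_or_ge (t+1) (lseq c.l1 J) with hc | hc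
  · rw [Nat.mod_eq_of_lt hc]
    refine ⟨hc, fun m => ?_⟩
    rw [blockOf_shift]
    have hpos : m * (lseq c.l1 J : ℤ) - ((t + 1 : ℕ) : ℤ) + 1
        = m * (lseq c.l1 J : ℤ) - t := by push_cast; ring
    rw [hpos]
    exact h.2 m
  · have hteq : t + 1 = lseq c.l1 J := by have := h.1; omega
    have h0 : (t + 1) % lseq c.l1 J = 0 := by rw [hteq]; exact Nat.mod_self _
    rw [h0]
    refine ⟨hl, fun m => ?_⟩
    rw [blockOf_shift]
    have htc : (t : ℤ) = (lseq c.l1 J : ℤ) - 1 := by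
      have : ((t:ℕ) : ℤ) + 1 = ((lseq c.l1 J : ℕ) : ℤ) := by exact_mod_cast congrArg (Nat.cast : ℕ → ℤ) hteq
      omega
    have hpos : m * (lseq c.l1 J : ℤ) - ((0 : ℕ) : ℤ) + 1
        = (m + 1) * (lseq c.l1 J : ℤ) - t := by rw [htc]; push_cast; ring
    rw [hpos]
    exact h.2 (m + 1)

/-- Word lengths are unbounded along points of the space. -/
lemma Construction.lseq_unbounded (c : Construction) {x : ℤ → Bool} (hx : x ∈ c.space) (n : ℕ) :
    ∃ k, 1 ≤ k ∧ n ≤ lseq c.l1 k := by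
  obtain ⟨j, hj, w, hw, hinf⟩ := hx 0 n
  refine ⟨j, hj, ?_⟩
  have h1 := hinf.length_le
  rw [c.wordLength j hj w hw] at h1
  simpa using h1

lemma Construction.Nseq_ge_two (c : Construction) (hne : c.space.Nonempty) {j : ℕ} (hj : 1 ≤ j) :
    2 ≤ Nseq c.l1 j := by
  by_contra h
  have hN1 : Nseq c.l1 j = 1 := by have := Npos c.l1 j hj; omega
  have hstab : ∀ k, j ≤ k → lseq c.l1 k = lseq c.l1 j ∧ Nseq c.l1 k = 1 := by
    intro k
    induction k with
    | zero => intro h0; have : j = 0 := by omega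
              omega
    | succ n ih =>
      intro hjk
      rcases Nat.eq_or_lt_of_le hjk with h1 | h1
      · rw [← h1]
        exact ⟨rfl, hN1⟩
      · have hn : j ≤ n := by omega
        obtain ⟨ih1, ih2⟩ := ih hn
        constructor
        · rw [lseq_succ c.l1 n (by omega), ih1, ih2, Nat.mul_one]
        · rw [Nseq_succ c.l1 n (by omega), ih2]
          simp [Nat.sqrt_one, Nat.factorial]
  obtain ⟨x, hx⟩ := hne
  obtain ⟨k, hk1, hk2⟩ := c.lseq_unbounded hx (lseq c.l1 j + 1)
  rcases le_total k j with hkj | hkj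
  · have := lseq_mono_s11 c.l1 k j hk1 hkj
    omega
  · have := (hstab k hkj).1
    omega
lemma measurable_ofFn_window (n : ℕ) (ct : ℤ) (P : List Bool → Prop) :
    MeasurableSet {x : ℤ → Bool | P (List.ofFn fun i : Fin n => x (ct + (i:ℕ)))} := by
  have heq : {x : ℤ → Bool | P (List.ofFn fun i : Fin n => x (ct + (i:ℕ)))}
      = (fun (x : ℤ → Bool) => (fun i : Fin n => x (ct + (i:ℕ)))) ⁻¹'
        {v : Fin n → Bool | P (List.ofFn v)} := rfl
  rw [heq]
  exact (measurable_pi_lambda _ (fun i => measurable_pi_apply _))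
    ((Set.toFinite _).measurableSet)

lemma Construction.measurable_space' (c : Construction) : MeasurableSet c.space := by
  have heq : c.space = ⋂ (a : ℤ) (n : ℕ),
      {x : ℤ → Bool |
        ∃ j, 1 ≤ j ∧ ∃ w ∈ c.C j, (List.ofFn fun i : Fin n => x (a + (i:ℕ))) <:+: w} := by
    ext x
    simp only [Set.mem_iInter, Set.mem_setOf_eq]
    exact Iff.rfl
  rw [heq]
  exact MeasurableSet.iInter fun a => MeasurableSet.iInter fun n =>
    measurable_ofFn_window n a (fun v => ∃ j, 1 ≤ j ∧ ∃ w ∈ c.C j, v <:+: w)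

lemma measurable_blockOf (l : ℕ) (p : ℤ) (Cs : List (List Bool)) :
    MeasurableSet {x : ℤ → Bool | blockOf x l p ∈ Cs} :=
  measurable_ofFn_window l p (fun v => v ∈ Cs)

/-- The set of points of the space whose level-`J` offset is `t`. -/
def Construction.offSet (c : Construction) (J t : ℕ) : Set (ℤ → Bool) :=
  {x | x ∈ c.space ∧ IsDecomp c J t x}

lemma Construction.measurable_offSet (c : Construction) (J t : ℕ) :
    MeasurableSet (c.offSet J t) := by
  have heq : c.offSet J t = c.space ∩ ({x : ℤ → Bool | t < lseq c.l1 J} ∩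
      ⋂ m : ℤ, {x | blockOf x (lseq c.l1 J) (m * (lseq c.l1 J : ℤ) - (t:ℤ)) ∈ c.C J}) := by
    ext x
    simp only [Construction.offSet, Set.mem_inter_iff, Set.mem_iInter, Set.mem_setOf_eq]
    exact ⟨fun ⟨h1, h2, h3⟩ => ⟨h1, h2, h3⟩, fun ⟨h1, h2, h3⟩ => ⟨h1, h2, h3⟩⟩
  rw [heq]
  exact c.measurable_space'.inter ((MeasurableSet.const _).inter
    (MeasurableSet.iInter fun m => measurable_blockOf _ _ _))
lemma mod_succ_inj {l t t' : ℕ} (ht : t < l) (ht' : t' < l)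
    (h : (t+1) % l = (t'+1) % l) : t = t' := by
  rcases Nat.lt_or_ge (t+1) l with h1 | h1 <;> rcases Nat.lt_or_ge (t'+1) l with h2' | h2'
  · rw [Nat.mod_eq_of_lt h1, Nat.mod_eq_of_lt h2'] at h; omega
  · have he : t'+1 = l := by omega
    rw [Nat.mod_eq_of_lt h1, he, Nat.mod_self] at h; omega
  · have he : t+1 = l := by omega
    rw [he, Nat.mod_self, Nat.mod_eq_of_lt h2'] at h; omega
  · omega

lemma div_mul_add {q r l : ℕ} (hl : 0 < l) (hr : r < l) : (q * l + r) / l = q := by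
  rw [Nat.add_div_eq_of_add_mod_lt (by rw [Nat.mul_mod_left, Nat.zero_add, Nat.mod_eq_of_lt hr]; omega)]
  rw [Nat.mul_div_cancel _ hl, Nat.div_eq_of_lt hr]
  omega

lemma count_permuted {N l : ℕ} (hN : 2 ≤ N) (hl : 0 < l)
    [inst : DecidablePred fun t => PermutedIdx N (t / l + 1)]
    [inst2 : DecidablePred fun q => PermutedIdx N (q + 1)] :
    ((Finset.range (l * N)).filter (fun t => PermutedIdx N (t / l + 1))).card
      = Nat.sqrt N * l := by
  classical
  set s := Nat.sqrt N with hs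
  have hs1 : 1 ≤ s := by
    rw [hs]
    exact (Nat.sqrt_pos).mpr (by omega)
  set Q : Finset ℕ := (Finset.range N).filter (fun q => PermutedIdx N (q + 1)) with hQ
  have hSQ : (Finset.range (l * N)).filter (fun t => PermutedIdx N (t / l + 1))
      = Q.biUnion (fun q => (Finset.range l).image (fun r => q * l + r)) := by
    ext t
    simp only [Finset.mem_filter, Finset.mem_range, Finset.mem_biUnion, Finset.mem_image, hQ]
    constructor
    · rintro ⟨htl, hperm⟩
      have hdm : l * (t / l) + t % l = t := Nat.div_add_mod t l
      have hql : t / l < N := by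
        have h2 : l * (t/l) ≤ t := Nat.mul_div_le t l
        by_contra hcon
        have h3 : N ≤ t / l := by omega
        have h4 : l * N ≤ l * (t / l) := Nat.mul_le_mul_left _ h3
        omega
      exact ⟨t / l, ⟨hql, hperm⟩, t % l, Nat.mod_lt _ hl, Nat.div_add_mod' t l⟩
    · rintro ⟨q, ⟨hqN, hperm⟩, r, hrl, rfl⟩
      have hdiv : (q * l + r) / l = q := div_mul_add hl hrl
      refine ⟨?_, by rw [hdiv]; exact hperm⟩
      have h4 : (q + 1) * l ≤ N * l := Nat.mul_le_mul_right _ (by omega)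
      have h5 : (q+1) * l = q * l + l := by ring
      have h6 : N * l = l * N := by ring
      omega
  rw [hSQ]
  have hinj : ∀ q : ℕ, Function.Injective (fun r => q * l + r) := by
    intro q a b hab
    simpa using hab
  rw [Finset.card_biUnion]
  · have hone : ∀ q ∈ Q, ((Finset.range l).image (fun r => q * l + r)).card = l := by
      intro q _
      rw [Finset.card_image_of_injective _ (hinj q), Finset.card_range]
    rw [Finset.sum_congr rfl hone, Finset.sum_const, smul_eq_mul]
    -- Q.card = s
    have hQcard : Q.card = s := by
      have hQeq : Q = insert 1 ((Finset.Icc 2 s).image (fun m => m^2 - 1)) := by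
        ext q
        simp only [hQ, Finset.mem_filter, Finset.mem_range, Finset.mem_insert,
          Finset.mem_image, Finset.mem_Icc]
        simp only [PermutedIdx]
        constructor
        · rintro ⟨hqN, h2 | ⟨m, hm2, hms, hmq⟩⟩
          · left; omega
          · right
            refine ⟨m, ⟨hm2, hms⟩, by omega⟩
        · rintro (rfl | ⟨m, ⟨hm2, hms⟩, rfl⟩)
          · exact ⟨by omega, Or.inl rfl⟩
          · have hm4 : 2^2 ≤ m^2 := Nat.pow_le_pow_left hm2 2
            have hmN : m^2 ≤ N := le_trans (Nat.pow_le_pow_left hms 2) (Nat.sqrt_le' N)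
            refine ⟨by omega, Or.inr ⟨m, hm2, hms, by omega⟩⟩
      rw [hQeq, Finset.card_insert_of_notMem, Finset.card_image_of_injOn, Nat.card_Icc]
      · omega
      · intro a ha b hb hab
        simp only [Finset.coe_Icc, Set.mem_Icc] at ha hb
        have hab' : a^2 - 1 = b^2 - 1 := hab
        have h4 : 2^2 ≤ a^2 := Nat.pow_le_pow_left ha.1 2
        have h5 : 2^2 ≤ b^2 := Nat.pow_le_pow_left hb.1 2
        have h6 : a^2 = b^2 := by omega
        exact Nat.pow_left_injective (by omega) h6
      · intro hmem
        simp only [Finset.mem_image, Finset.mem_Icc] at hmem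
        obtain ⟨m, ⟨hm2, hms⟩, hmq⟩ := hmem
        have h4 : 2^2 ≤ m^2 := Nat.pow_le_pow_left hm2 2
        omega
    rw [hQcard]
  · intro q hq q' hq' hne
    rw [Function.onFun, Finset.disjoint_left]
    rintro a ha ha'
    simp only [Finset.mem_image, Finset.mem_range] at ha ha'
    obtain ⟨r, hr, rfl⟩ := ha
    obtain ⟨r', hr', heq⟩ := ha'
    have h1 : (q * l + r) / l = q := div_mul_add hl hr
    have h2 : (q' * l + r') / l = q' := div_mul_add hl hr'
    rw [heq] at h2
    exact hne (by omega)

end Ch1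

/-- Marker variant: the set `L_j` of points whose `C_j`-block containing
coordinate `0` sits at a permuted position has measure `⌊√N_j⌋ / N_j`. -/
theorem statement11 (c : MarkerConstruction) (μ : Measure (ℤ → Bool))
    (hμ : IsInvProbOn μ c.toConstruction.space) (j : ℕ) (hj : 1 ≤ j) :
    μ { x | x ∈ c.toConstruction.space ∧
        PermutedIdx (Nseq c.l1 j)
          (c.toConstruction.tOffset (j + 1) x / lseq c.l1 j + 1) }
      = (Nat.sqrt (Nseq c.l1 j) : ENNReal) / (Nseq c.l1 j : ENNReal) := by
  classical
  obtain ⟨hprob, hpres, hX1⟩ := hμ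
  have hJ1 : 1 ≤ j + 1 := by omega
  have hlj : 0 < lseq c.l1 j := lpos c.hl1 j hj
  have hlsucc : lseq c.l1 (j+1) = lseq c.l1 j * Nseq c.l1 j := lseq_succ c.l1 j hj
  set l := lseq c.l1 (j+1) with hldef
  set lj := lseq c.l1 j with hljdef
  set N := Nseq c.l1 j with hNdef
  -- the space is nonempty, hence `N ≥ 2`
  have hne : c.toConstruction.space.Nonempty := by
    rcases Set.eq_empty_or_nonempty c.toConstruction.space with h | h
    · rw [h] at hX1
      simp at hX1
    · exact h
  have hN2 : 2 ≤ N := c.toConstruction.Nseq_ge_two hne hj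
  have hl2 : 2 ≤ l := by
    rw [hlsucc]
    nlinarith
  set A : ℕ → Set (ℤ → Bool) := fun t => c.toConstruction.offSet (j+1) t with hA
  have hAmeas : ∀ t, MeasurableSet (A t) := fun t => c.toConstruction.measurable_offSet (j+1) t
  -- the shift carries `A ((t+1) % l)` to `A t`
  have hpre : ∀ t, t < l → shift ⁻¹' (A ((t+1) % l)) = A t := by
    intro t htl
    ext x
    simp only [Set.mem_preimage, hA, Construction.offSet, Set.mem_setOf_eq]
    constructor
    · rintro ⟨hxs, hxd⟩
      have hxs' : x ∈ c.toConstruction.space := (c.toConstruction.shift_mem_space x).mp hxs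
      obtain ⟨t', ht'⟩ := c.toConstruction.exists_decomp hxs' hJ1
      have hsh := ht'.shift_offset
      have heq : (t'+1) % l = (t+1) % l := c.unique_t (j+1) hJ1 (shift x) _ _ hsh hxd
      have ht'l : t' < l := ht'.1
      have : t' = t := mod_succ_inj ht'l htl heq
      subst this
      exact ⟨hxs', ht'⟩
    · rintro ⟨hxs, hxd⟩
      exact ⟨(c.toConstruction.shift_mem_space x).mpr hxs, hxd.shift_offset⟩
  have hmeq : ∀ t, t < l → μ (A ((t+1) % l)) = μ (A t) := by
    intro t htl
    rw [← hpre t htl]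
    exact (hpres.measure_preimage (hAmeas _).nullMeasurableSet).symm
  have hconst : ∀ k : ℕ, μ (A (k % l)) = μ (A 0) := by
    intro k
    induction k with
    | zero => rw [Nat.zero_mod]
    | succ k ih =>
      have h1 : (k+1) % l = ((k % l) + 1) % l := by
        conv_lhs => rw [Nat.add_mod k 1 l, Nat.mod_eq_of_lt (show 1 < l by omega)]
      rw [h1, hmeq (k % l) (Nat.mod_lt _ (by omega)), ih]
  have hconst' : ∀ t, t < l → μ (A t) = μ (A 0) := by
    intro t ht
    rw [← Nat.mod_eq_of_lt ht, hconst]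
  -- the sets `A t`, `t < l`, partition the space
  have hdisj : (↑(Finset.range l) : Set ℕ).PairwiseDisjoint A := by
    intro t ht t' ht' hne'
    simp only [Function.onFun]
    rw [Set.disjoint_left]
    rintro x ⟨hxs, hxd⟩ ⟨hxs', hxd'⟩
    exact hne' (c.unique_t (j+1) hJ1 x t t' hxd hxd')
  have hcover : c.toConstruction.space = ⋃ t ∈ Finset.range l, A t := by
    ext x
    simp only [Set.mem_iUnion, Finset.mem_range, exists_prop, hA, Construction.offSet,
      Set.mem_setOf_eq]
    constructor
    · intro hx
      obtain ⟨t, ht⟩ := c.toConstruction.exists_decomp hx hJ1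
      exact ⟨t, ht.1, hx, ht⟩
    · rintro ⟨t, htl, hx, -⟩
      exact hx
  have hsum : ∑ t ∈ Finset.range l, μ (A t) = 1 := by
    rw [← measure_biUnion_finset hdisj (fun t _ => hAmeas t), ← hcover, hX1]
  have hsum' : (l : ENNReal) * μ (A 0) = 1 := by
    rw [← hsum]
    rw [Finset.sum_congr rfl (fun t ht => hconst' t (Finset.mem_range.mp ht)),
      Finset.sum_const, Finset.card_range, nsmul_eq_mul]
  have hlne0 : ((l:ℕ) : ENNReal) ≠ 0 := by
    simp only [ne_eq, Nat.cast_eq_zero]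
    omega
  have hlnetop : ((l:ℕ) : ENNReal) ≠ ⊤ := ENNReal.natCast_ne_top l
  have hμ0 : μ (A 0) = 1 / ((l:ℕ) : ENNReal) := (ENNReal.eq_div_iff hlne0 hlnetop).mpr hsum'
  -- identify the target set
  set S := (Finset.range l).filter (fun t => PermutedIdx N (t / lj + 1)) with hS
  have htarget : { x | x ∈ c.toConstruction.space ∧
      PermutedIdx N (c.toConstruction.tOffset (j + 1) x / lj + 1) }
      = ⋃ t ∈ S, A t := by
    ext x
    simp only [Set.mem_setOf_eq, Set.mem_iUnion, Finset.mem_filter, Finset.mem_range,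
      exists_prop, hS, hA, Construction.offSet]
    constructor
    · rintro ⟨hxs, hperm⟩
      obtain ⟨t, ht⟩ := c.toConstruction.exists_decomp hxs hJ1
      have heq := c.tOffset_eq hJ1 ht
      exact ⟨t, ⟨ht.1, by rw [← heq]; exact hperm⟩, hxs, ht⟩
    · rintro ⟨t, ⟨htl, hperm⟩, hxs, hxd⟩
      have heq := c.tOffset_eq hJ1 hxd
      exact ⟨hxs, by rw [heq]; exact hperm⟩
  rw [htarget, measure_biUnion_finset
      (hdisj.subset (Finset.coe_subset.mpr (Finset.filter_subset _ _)))
      (fun t _ => hAmeas t)]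
  have hSsum : ∑ t ∈ S, μ (A t) = (S.card : ENNReal) * μ (A 0) := by
    rw [Finset.sum_congr rfl
      (fun t ht => hconst' t (Finset.mem_range.mp (Finset.mem_filter.mp ht).1)),
      Finset.sum_const, nsmul_eq_mul]
  have hcard : S.card = Nat.sqrt N * lj := by
    rw [hS]
    have : Finset.range l = Finset.range (lj * N) := by rw [hlsucc]
    rw [this]
    exact count_permuted hN2 hlj
  rw [hSsum, hcard, hμ0]
  -- final arithmetic in `ENNReal`
  have hljne0 : ((lj:ℕ) : ENNReal) ≠ 0 := by
    simp only [ne_eq, Nat.cast_eq_zero]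
    omega
  have hljnetop : ((lj:ℕ) : ENNReal) ≠ ⊤ := ENNReal.natCast_ne_top lj
  rw [one_div, ← div_eq_mul_inv]
  have h1 : ((Nat.sqrt N * lj : ℕ) : ENNReal) = ((lj:ℕ) : ENNReal) * (Nat.sqrt N : ENNReal) := by
    push_cast
    ring
  have h2 : ((l:ℕ) : ENNReal) = ((lj:ℕ) : ENNReal) * (N : ENNReal) := by
    rw [hlsucc]
    push_cast
    ring
  rw [h1, h2, ENNReal.mul_div_mul_left _ _ hljne0 hljnetop]

end EntDim
end
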